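/- Let b ≥ 1 and τ ∈ {τ^b_0, τ^b_1}, and let φ be an instance of cubic monotone one-in-three 3-SAT with m clauses. If φ has a one-in-three model, then there is a τ-region (sup, sig) of the translator T such that sig(k_0) = … = sig(k_{6m−1}) = (0,b). -/

import Mathlib

/-! ## Transition systems -/

/-- A transition system over ambient state type `S` and event type `E`:
a set of states, a set of events, and a (deterministic or not) labeled
transition relation whose transitions stay inside the state/event sets. -/
structure TS (S E : Type) where
  states : Set S
  events : Set E
  tr : S → E → S → Prop
  tr_mem : ∀ ⦃s e s'⦄, tr s e s' → s ∈ states ∧ e ∈ events ∧ s' ∈ states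

/-- Event `e` occurs at state `s`. -/
def TS.occurs {S E : Type} (A : TS S E) (e : E) (s : S) : Prop := ∃ s', A.tr s e s'

/-! ## The types of nets `τ^b_t`, `t ∈ {0,1,2,3}` -/

/-- Events of the types of nets: pairs `(m,n)` or group events `c ∈ ℤ_{b+1}`. -/
inductive Tev where
  | pr (m n : ℕ)
  | gr (c : ℕ)
deriving DecidableEq

def Tev.minus : Tev → ℕ | .pr m _ => m | .gr _ => 0
def Tev.plus : Tev → ℕ | .pr _ n => n | .gr _ => 0
def Tev.absv : Tev → ℕ | .pr _ _ => 0 | .gr c => c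

/-- Membership in the event set of the type `τ^b_t`:
for `t ∈ {1,3}` (pure types) the pair events `(m,n)` with `m,n ≥ 1` are discarded;
for `t ∈ {2,3}` the pair `(0,0)` is discarded and the group events `0,…,b` are present;
for `t ∈ {0,1}` there are no group events. -/
def tevOk (b t : ℕ) : Tev → Prop
  | .pr m n => m ≤ b ∧ n ≤ b ∧ ((t = 1 ∨ t = 3) → (m = 0 ∨ n = 0)) ∧
      ((t = 2 ∨ t = 3) → ¬(m = 0 ∧ n = 0))
  | .gr c => c ≤ b ∧ (t = 2 ∨ t = 3)

/-- The partial transition function of the types `τ^b_t` on the states `{0,…,b}`. -/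
def tevStep (b s : ℕ) : Tev → Option ℕ
  | .pr m n => if m ≤ s ∧ s - m + n ≤ b then some (s - m + n) else none
  | .gr c => some ((s + c) % (b + 1))

/-! ## Regions, ESSP and SSP -/

/-- A `τ^b_t`-region of a transition system `A`. -/
structure Region (b t : ℕ) {S E : Type} (A : TS S E) where
  sup : S → ℕ
  sig : E → Tev
  sup_le : ∀ s ∈ A.states, sup s ≤ b
  sig_ok : ∀ e ∈ A.events, tevOk b t (sig e)
  resp : ∀ ⦃s e s'⦄, A.tr s e s' → tevStep b (sup s) (sig e) = some (sup s')

/-- A region solves the ESSP atom `(e,s)` if `sig e` does not occur at `sup s` in `τ`. -/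
def Region.solvesESSP {b t : ℕ} {S E : Type} {A : TS S E} (R : Region b t A)
    (e : E) (s : S) : Prop :=
  tevStep b (R.sup s) (R.sig e) = none

/-- A region solves the SSP atom `(s,s')` if `sup s ≠ sup s'`. -/
def Region.solvesSSP {b t : ℕ} {S E : Type} {A : TS S E} (R : Region b t A)
    (s s' : S) : Prop :=
  R.sup s ≠ R.sup s'

/-- `A` has the `τ^b_t`-ESSP: every ESSP atom is solvable. -/
def TS.hasESSP (b t : ℕ) {S E : Type} (A : TS S E) : Prop :=
  ∀ e ∈ A.events, ∀ s ∈ A.states, ¬ A.occurs e s → ∃ R : Region b t A, R.solvesESSP e s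

/-- `A` has the `τ^b_t`-SSP: every SSP atom is solvable. -/
def TS.hasSSP (b t : ℕ) {S E : Type} (A : TS S E) : Prop :=
  ∀ s ∈ A.states, ∀ s' ∈ A.states, s ≠ s' → ∃ R : Region b t A, R.solvesSSP s s'

/-- `A` is `τ^b_t`-feasible. -/
def TS.feasible (b t : ℕ) {S E : Type} (A : TS S E) : Prop :=
  A.hasESSP b t ∧ A.hasSSP b t

/-! ## Combinators: linear TSs, relabeled states, unions -/

/-- The linear TS given by the word `w`: states `0,…,w.length`, and an
`e`-labeled transition from `s` to `s+1` whenever `w[s] = e`. -/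
def TS.chain {E : Type} (w : List E) : TS ℕ E where
  states := {s | s ≤ w.length}
  events := {e | e ∈ w}
  tr s e s' := w[s]? = some e ∧ s' = s + 1
  tr_mem := by
    rintro s e s' ⟨h, rfl⟩
    have hs : s < w.length := by
      by_contra hc
      rw [List.getElem?_eq_none (Nat.le_of_not_lt hc)] at h
      cases h
    obtain ⟨hlt, rfl⟩ := List.getElem?_eq_some_iff.mp h
    exact ⟨Nat.le_of_lt hs, List.getElem_mem hlt, hs⟩

/-- Renaming the states of a TS along `f`. -/
def TS.mapStates {S S' E : Type} (f : S → S') (A : TS S E) : TS S' E where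
  states := f '' A.states
  events := A.events
  tr s e s' := ∃ a a', A.tr a e a' ∧ s = f a ∧ s' = f a'
  tr_mem := by
    rintro s e s' ⟨a, a', h, rfl, rfl⟩
    obtain ⟨h1, h2, h3⟩ := A.tr_mem h
    exact ⟨⟨a, h1, rfl⟩, h2, ⟨a', h3, rfl⟩⟩

/-- The union `U(A_i)_{i : ι}` of a family of TSs over the same ambient types. -/
def TS.unionFam {ι S E : Type} (F : ι → TS S E) : TS S E where
  states := ⋃ i, (F i).states
  events := ⋃ i, (F i).events
  tr s e s' := ∃ i, (F i).tr s e s'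
  tr_mem := by
    rintro s e s' ⟨i, h⟩
    obtain ⟨h1, h2, h3⟩ := (F i).tr_mem h
    exact ⟨Set.mem_iUnion.2 ⟨i, h1⟩, Set.mem_iUnion.2 ⟨i, h2⟩, Set.mem_iUnion.2 ⟨i, h3⟩⟩

/-- The SSP for a union: all SSP atoms given by distinct states of the *same*
constituent are solvable by regions of the union. -/
def unionSSP (b t : ℕ) {ι S E : Type} (F : ι → TS S E) : Prop :=
  ∀ i : ι, ∀ s ∈ (F i).states, ∀ s' ∈ (F i).states, s ≠ s' →
    ∃ R : Region b t (TS.unionFam F), R.solvesSSP s s'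
/-! ## Cubic monotone one-in-three 3-SAT -/

/-- An instance `φ = {C_0,…,C_{m-1}}` of cubic monotone one-in-three 3-SAT with
variables `V(φ) = {X_0,…,X_{m-1}}` (identified with `Fin m`): every clause
`C_i = {X_{i,0}, X_{i,1}, X_{i,2}}` consists of three distinct variables and every
variable occurs in exactly three clauses. -/
structure SatInstance (m : ℕ) where
  C : Fin m → Fin 3 → Fin m
  clause_distinct : ∀ i : Fin m, Function.Injective (C i)
  cubic : ∀ v : Fin m,
    (Finset.univ.filter (fun p : Fin m × Fin 3 => C p.1 p.2 = v)).card = 3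

/-- `M` is a one-in-three model of `φ`: every clause contains exactly one variable of `M`. -/
def SatInstance.model {m : ℕ} (φ : SatInstance m) (M : Set (Fin m)) : Prop :=
  ∀ i : Fin m, ∃! r : Fin 3, φ.C i r ∈ M

/-! ## Events of the gadgets -/

inductive Ev where
  | k | z | z0 | z1 | o0 | o1 | o2 | u
  | kj (j : ℕ)  -- the interface events k_j
  | x (i : ℕ)   -- the events x_i
  | p (i : ℕ)   -- the events p_i
  | vj (j : ℕ)  -- the events v_j
  | X (v : ℕ)   -- the variable events X_v
deriving DecidableEq

/-! ## The gadget TSs (states are pairs (tag, position)) -/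

/-- `H_0`, with `h_{0,i} = (0,i)`. -/
def H0 (b : ℕ) : TS (ℕ × ℕ) Ev :=
  (TS.chain (List.replicate b Ev.k ++ List.replicate b Ev.z ++ [Ev.o0] ++
    List.replicate b Ev.k ++ List.replicate b Ev.z ++ List.replicate b Ev.o1 ++
    List.replicate b Ev.k)).mapStates (fun i => (0, i))

/-- `H_1`, with `h_{1,i} = (0,i)`. -/
def H1 (b : ℕ) : TS (ℕ × ℕ) Ev :=
  (TS.chain (List.replicate b Ev.k ++ [Ev.z0, Ev.o0] ++ List.replicate b Ev.k ++
    [Ev.z1, Ev.z0, Ev.o2] ++ List.replicate b Ev.k)).mapStates (fun i => (0, i))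

/-- `H_2`, with `h_{2,i} = (0,i)`. -/
def H2 (b : ℕ) : TS (ℕ × ℕ) Ev :=
  (TS.chain (List.replicate b Ev.k ++ [Ev.o0] ++ List.replicate b Ev.k ++
    [Ev.o2] ++ List.replicate b Ev.k)).mapStates (fun i => (0, i))

/-- `D_{j,0}`, with `d_{j,0,i} = (j+1,i)`. -/
def D0 (b j : ℕ) : TS (ℕ × ℕ) Ev :=
  (TS.chain ([Ev.o0, Ev.kj j] ++ List.replicate (b+1) Ev.o1)).mapStates
    (fun i => (j + 1, i))

/-- `D_{j,1}`, with `d_{j,1,i} = (j+1,i)`. -/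
def D1 (b j : ℕ) : TS (ℕ × ℕ) Ev :=
  (TS.chain [Ev.o0, Ev.kj j, Ev.o2]).mapStates (fun i => (j + 1, i))

/-- The word of the gadget `T_{i,a}` (`a ∈ {0,1,2}`) of the translator `T`. -/
def Tword (b : ℕ) {m : ℕ} (φ : SatInstance m) (i : Fin m) (a : Fin 3) : List Ev :=
  if a = 0 then
    [Ev.kj (6 * (i : ℕ))] ++ List.replicate b (Ev.X ((φ.C i 0 : Fin m) : ℕ)) ++
    [Ev.x (i : ℕ)] ++ List.replicate b (Ev.X ((φ.C i 2 : Fin m) : ℕ)) ++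
    [Ev.kj (6 * (i : ℕ) + 1)]
  else if a = 1 then
    [Ev.kj (6 * (i : ℕ) + 2)] ++ List.replicate b (Ev.X ((φ.C i 1 : Fin m) : ℕ)) ++
    [Ev.p (i : ℕ), Ev.kj (6 * (i : ℕ) + 3)]
  else
    [Ev.kj (6 * (i : ℕ) + 4), Ev.x (i : ℕ), Ev.p (i : ℕ), Ev.kj (6 * (i : ℕ) + 5)]

/-- The gadget `T_{i,a}` of the translator `T`, with states `t_{i,a,pos} = (tag, pos)`. -/
def Tgad (b tag : ℕ) {m : ℕ} (φ : SatInstance m) (i : Fin m) (a : Fin 3) :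
    TS (ℕ × ℕ) Ev :=
  (TS.chain (Tword b φ i a)).mapStates (fun pos => (tag, pos))

/-- The translator `T = U(T_{0,0}, T_{0,1}, T_{0,2}, …, T_{m-1,2})` (standalone,
with `t_{i,a,pos} = (3i+a+1, pos)`). -/
def Ttrans (b : ℕ) {m : ℕ} (φ : SatInstance m) : TS (ℕ × ℕ) Ev :=
  TS.unionFam (fun q : Fin m × Fin 3 => Tgad b (3 * (q.1 : ℕ) + (q.2 : ℕ) + 1) φ q.1 q.2)

/-- `H_3`, with `h_{3,0,i} = (0,i)` and `h_{3,1,i} = (1,i)`: the union of the path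
`h_{3,0,0} --k^b--> h_{3,0,b}` and the path
`h_{3,0,0} --u--> h_{3,1,0} --k^{b-1}--> h_{3,1,b-1} --z--> h_{3,0,b}`. -/
def H3 (b : ℕ) : TS (ℕ × ℕ) Ev :=
  TS.unionFam (fun c : Bool =>
    if c then (TS.chain (List.replicate b Ev.k)).mapStates (fun i => (0, i))
    else (TS.chain ([Ev.u] ++ List.replicate (b-1) Ev.k ++ [Ev.z])).mapStates
      (fun i => if i = 0 then (0, 0) else if i = b + 1 then (0, b) else (1, i - 1)))

/-- The set `E_0 = {(m,m) : 1 ≤ m ≤ b} ∪ {0}`. -/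
def Ezero (b : ℕ) : Set Tev :=
  {e | (∃ q, 1 ≤ q ∧ q ≤ b ∧ e = Tev.pr q q) ∨ e = Tev.gr 0}

/-- The first row `f_{j,0,0} --k^b--> f_{j,0,b}` of `F_j`, with `f_{j,0,i} = (4j+2, i)`. -/
def Fch0 (b j : ℕ) : TS (ℕ × ℕ) Ev :=
  (TS.chain (List.replicate b Ev.k)).mapStates (fun i => (4 * j + 2, i))

/-- The second row `f_{j,0,0} --v_j--> f_{j,1,0} --k^{b-1}--> f_{j,1,b-1} --X_j--> f_{j,0,b}`
of `F_j`, with `f_{j,1,i} = (4j+3, i)`. -/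
def Fch1 (b j : ℕ) : TS (ℕ × ℕ) Ev :=
  (TS.chain ([Ev.vj j] ++ List.replicate (b-1) Ev.k ++ [Ev.X j])).mapStates
    (fun i => if i = 0 then (4 * j + 2, 0) else if i = b + 1 then (4 * j + 2, b)
      else (4 * j + 3, i - 1))

/-- `F_j` as the union of its two rows. -/
def Fgad (b j : ℕ) : TS (ℕ × ℕ) Ev :=
  TS.unionFam (fun c : Bool => if c then Fch0 b j else Fch1 b j)

/-- `G_j`, with `g_{j,i} = (4j+4, i)`. -/
def Ggad (b j : ℕ) : TS (ℕ × ℕ) Ev :=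
  (TS.chain (List.replicate b Ev.k ++ [Ev.X j])).mapStates (fun i => (4 * j + 4, i))

/-- The clause gadget `T_i` (of the translator for the group-extended types),
with `t_{i,pos} = (4i+5, pos)`. -/
def Tgad2 (b : ℕ) {m : ℕ} (φ : SatInstance m) (i : Fin m) : TS (ℕ × ℕ) Ev :=
  (TS.chain (List.replicate b Ev.k ++
    [Ev.X ((φ.C i 0 : Fin m) : ℕ), Ev.X ((φ.C i 1 : Fin m) : ℕ),
     Ev.X ((φ.C i 2 : Fin m) : ℕ), Ev.z] ++ List.replicate b Ev.k)).mapStates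
    (fun pos => (4 * (i : ℕ) + 5, pos))

/-- The translator `T_τ = U(F_0, G_0, …, F_{m-1}, G_{m-1}, T_0, …, T_{m-1})`
for the group-extended types. -/
def Ttrans2fam (b : ℕ) {m : ℕ} (φ : SatInstance m) : Fin m × Fin 3 → TS (ℕ × ℕ) Ev :=
  fun q => if q.2 = 0 then Fgad b (q.1 : ℕ)
    else if q.2 = 1 then Ggad b (q.1 : ℕ) else Tgad2 b φ q.1

def Ttrans2 (b : ℕ) {m : ℕ} (φ : SatInstance m) : TS (ℕ × ℕ) Ev :=
  TS.unionFam (Ttrans2fam b φ)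
/-! ## The key unions and the unions of key and translator -/

/-- The family of constituents of the key `K_{τ^b_0} = U(H_0, D_{0,0},…,D_{6m-1,0})`. -/
def K0fam (b m : ℕ) : Option (Fin (6 * m)) → TS (ℕ × ℕ) Ev
  | none => H0 b
  | some j => D0 b (j : ℕ)

def K0 (b m : ℕ) : TS (ℕ × ℕ) Ev := TS.unionFam (K0fam b m)

/-- The family of constituents of the key `K_{τ^b_1} = U(H_1, D_{0,1},…,D_{6m-1,1})`. -/
def K1fam (b m : ℕ) : Option (Fin (6 * m)) → TS (ℕ × ℕ) Ev
  | none => H1 b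
  | some j => D1 b (j : ℕ)

def K1 (b m : ℕ) : TS (ℕ × ℕ) Ev := TS.unionFam (K1fam b m)

/-- The family of constituents of the key `K = U(H_2, D_{0,1},…,D_{6m-1,1})`. -/
def K2fam (b m : ℕ) : Option (Fin (6 * m)) → TS (ℕ × ℕ) Ev
  | none => H2 b
  | some j => D1 b (j : ℕ)

def K2 (b m : ℕ) : TS (ℕ × ℕ) Ev := TS.unionFam (K2fam b m)

/-- The family of constituents of `U_{τ^b_0} = U(H_0, D_{0,0},…,D_{6m-1,0}, T)`. -/
def U0fam (b : ℕ) {m : ℕ} (φ : SatInstance m) :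
    Option (Fin (6 * m) ⊕ Fin m × Fin 3) → TS (ℕ × ℕ) Ev
  | none => H0 b
  | some (.inl j) => D0 b (j : ℕ)
  | some (.inr q) => Tgad b (6 * m + 1 + 3 * (q.1 : ℕ) + (q.2 : ℕ)) φ q.1 q.2

def U0 (b : ℕ) {m : ℕ} (φ : SatInstance m) : TS (ℕ × ℕ) Ev := TS.unionFam (U0fam b φ)

/-- The family of constituents of `U_{τ^b_1} = U(H_1, D_{0,1},…,D_{6m-1,1}, T)`. -/
def U1fam (b : ℕ) {m : ℕ} (φ : SatInstance m) :
    Option (Fin (6 * m) ⊕ Fin m × Fin 3) → TS (ℕ × ℕ) Ev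
  | none => H1 b
  | some (.inl j) => D1 b (j : ℕ)
  | some (.inr q) => Tgad b (6 * m + 1 + 3 * (q.1 : ℕ) + (q.2 : ℕ)) φ q.1 q.2

def U1 (b : ℕ) {m : ℕ} (φ : SatInstance m) : TS (ℕ × ℕ) Ev := TS.unionFam (U1fam b φ)

/-- The family of constituents of `W = U(H_2, D_{0,1},…,D_{6m-1,1}, T)`. -/
def Wfam (b : ℕ) {m : ℕ} (φ : SatInstance m) :
    Option (Fin (6 * m) ⊕ Fin m × Fin 3) → TS (ℕ × ℕ) Ev
  | none => H2 b
  | some (.inl j) => D1 b (j : ℕ)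
  | some (.inr q) => Tgad b (6 * m + 1 + 3 * (q.1 : ℕ) + (q.2 : ℕ)) φ q.1 q.2

def Wun (b : ℕ) {m : ℕ} (φ : SatInstance m) : TS (ℕ × ℕ) Ev := TS.unionFam (Wfam b φ)

/-- The family of constituents of
`U_τ = U(H_3, F_0, G_0, …, F_{m-1}, G_{m-1}, T_0, …, T_{m-1})` for `τ ∈ {τ^b_2, τ^b_3}`. -/
def U2fam (b : ℕ) {m : ℕ} (φ : SatInstance m) :
    Option (Fin m × Fin 3) → TS (ℕ × ℕ) Ev
  | none => H3 b
  | some q => Ttrans2fam b φ q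

def U2 (b : ℕ) {m : ℕ} (φ : SatInstance m) : TS (ℕ × ℕ) Ev := TS.unionFam (U2fam b φ)

/-! ## The joining `A(U)` -/

/-- The joining `A(U)` of a union `U = U(A_0,…,A_n)` of initialized TSs (`A_i`
initialized at `s0 i`): fresh connector states `q_i = Sum.inr i`, fresh events
`w_{i+1} = Sum.inr (Sum.inl i)` (`i : Fin n`) and `y_i = Sum.inr (Sum.inr i)`,
and transitions `q_i --w_{i+1}--> q_{i+1}` and `q_i --y_i--> s0 i`. -/
def joining {S E : Type} {n : ℕ} (F : Fin (n + 1) → TS S E) (s0 : Fin (n + 1) → S)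
    (h0 : ∀ i, s0 i ∈ (F i).states) :
    TS (S ⊕ Fin (n + 1)) (E ⊕ (Fin n ⊕ Fin (n + 1))) where
  states := {st | (∃ a ∈ (TS.unionFam F).states, st = Sum.inl a) ∨ ∃ q, st = Sum.inr q}
  events := {ev | (∃ e ∈ (TS.unionFam F).events, ev = Sum.inl e) ∨ ∃ c, ev = Sum.inr c}
  tr st ev st' :=
    (∃ a e a', (TS.unionFam F).tr a e a' ∧
        st = Sum.inl a ∧ ev = Sum.inl e ∧ st' = Sum.inl a') ∨
    (∃ i : Fin n, st = Sum.inr i.castSucc ∧ ev = Sum.inr (Sum.inl i) ∧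
        st' = Sum.inr i.succ) ∨
    (∃ i : Fin (n + 1), st = Sum.inr i ∧ ev = Sum.inr (Sum.inr i) ∧
        st' = Sum.inl (s0 i))
  tr_mem := by
    rintro st ev st' (⟨a, e, a', h, rfl, rfl, rfl⟩ | ⟨i, rfl, rfl, rfl⟩ | ⟨i, rfl, rfl, rfl⟩)
    · obtain ⟨h1, h2, h3⟩ := (TS.unionFam F).tr_mem h
      exact ⟨Or.inl ⟨a, h1, rfl⟩, Or.inl ⟨e, h2, rfl⟩, Or.inl ⟨a', h3, rfl⟩⟩
    · exact ⟨Or.inr ⟨_, rfl⟩, Or.inr ⟨_, rfl⟩, Or.inr ⟨_, rfl⟩⟩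
    · exact ⟨Or.inr ⟨_, rfl⟩, Or.inr ⟨_, rfl⟩,
        Or.inl ⟨_, Set.mem_iUnion.2 ⟨i, h0 i⟩, rfl⟩⟩
/-! ## Auxiliary machinery for Statement 8 -/

namespace Stmt8aux

/-- One deterministic step of the run of a signature along a word. -/
def stepv (b : ℕ) (sig : Ev → Tev) (v : ℕ) (e : Ev) : ℕ := (tevStep b v (sig e)).getD 0

/-- The value reached after running a word from `v`. -/
def runEnd (b : ℕ) (sig : Ev → Tev) (v : ℕ) (w : List Ev) : ℕ := w.foldl (stepv b sig) v

/-- Every step of the run of `w` from `v` is defined. -/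
def runsOk (b : ℕ) (sig : Ev → Tev) : ℕ → List Ev → Prop
  | _, [] => True
  | v, e :: w => (tevStep b v (sig e)).isSome ∧ runsOk b sig (stepv b sig v e) w

lemma runEnd_nil (b : ℕ) (sig : Ev → Tev) (v : ℕ) : runEnd b sig v [] = v := rfl

lemma runEnd_cons (b : ℕ) (sig : Ev → Tev) (v : ℕ) (e : Ev) (w : List Ev) :
    runEnd b sig v (e :: w) = runEnd b sig (stepv b sig v e) w := rfl

lemma runEnd_append (b : ℕ) (sig : Ev → Tev) (v : ℕ) (w1 w2 : List Ev) :
    runEnd b sig v (w1 ++ w2) = runEnd b sig (runEnd b sig v w1) w2 :=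
  List.foldl_append ..

lemma runsOk_append {b : ℕ} {sig : Ev → Tev} :
    ∀ (w1 : List Ev) (v : ℕ) (w2 : List Ev),
    runsOk b sig v (w1 ++ w2) ↔ runsOk b sig v w1 ∧ runsOk b sig (runEnd b sig v w1) w2 := by
  intro w1
  induction w1 with
  | nil => intro v w2; simp [runsOk, runEnd_nil]
  | cons a w ih =>
    intro v w2
    simp only [List.cons_append, List.append_eq, runsOk, runEnd_cons, ih, and_assoc]

lemma runsOk_getElem {b : ℕ} {sig : Ev → Tev} :
    ∀ (w : List Ev) (v pos : ℕ) (e : Ev), runsOk b sig v w → w[pos]? = some e →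
    tevStep b (runEnd b sig v (w.take pos)) (sig e)
      = some (runEnd b sig v (w.take (pos + 1))) := by
  intro w
  induction w with
  | nil => intro v pos e _ h; simp at h
  | cons a w ih =>
    intro v pos e hok hget
    cases pos with
    | zero =>
      simp only [List.getElem?_cons_zero, Option.some.injEq] at hget
      subst hget
      obtain ⟨x, hx⟩ := Option.isSome_iff_exists.mp hok.1
      simp [runEnd_nil, runEnd_cons, runEnd, stepv, hx]
    | succ p =>
      simp only [List.getElem?_cons_succ] at hget
      simpa [List.take_succ_cons, runEnd_cons] using ih (stepv b sig v a) p e hok.2 hget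

/-- `Runs b sig v w v'` : the run of `w` from `v` is everywhere defined and ends at `v'`. -/
def Runs (b : ℕ) (sig : Ev → Tev) (v : ℕ) (w : List Ev) (v' : ℕ) : Prop :=
  runsOk b sig v w ∧ runEnd b sig v w = v'

lemma Runs.nil {b : ℕ} {sig : Ev → Tev} (v : ℕ) : Runs b sig v [] v := ⟨trivial, rfl⟩

lemma Runs.append {b : ℕ} {sig : Ev → Tev} {v v1 v2 : ℕ} {w1 w2 : List Ev}
    (h1 : Runs b sig v w1 v1) (h2 : Runs b sig v1 w2 v2) :
    Runs b sig v (w1 ++ w2) v2 := by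
  obtain ⟨o1, e1⟩ := h1
  obtain ⟨o2, e2⟩ := h2
  refine ⟨(runsOk_append ..).mpr ⟨o1, by rwa [e1]⟩, ?_⟩
  rw [runEnd_append, e1, e2]

lemma Runs.cons {b : ℕ} {sig : Ev → Tev} {v v1 v2 : ℕ} {e : Ev} {w : List Ev}
    (h : tevStep b v (sig e) = some v1) (h2 : Runs b sig v1 w v2) :
    Runs b sig v (e :: w) v2 := by
  have hs : stepv b sig v e = v1 := by simp [stepv, h]
  exact ⟨⟨by simp [h], hs ▸ h2.1⟩, by rw [runEnd_cons, hs]; exact h2.2⟩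

lemma Runs.single {b : ℕ} {sig : Ev → Tev} {v v' : ℕ} {e : Ev}
    (h : tevStep b v (sig e) = some v') : Runs b sig v [e] v' :=
  (Runs.cons h (Runs.nil v'))

lemma step00 {b : ℕ} {sig : Ev → Tev} {e : Ev} (he : sig e = Tev.pr 0 0) {v : ℕ}
    (hv : v ≤ b) : tevStep b v (sig e) = some v := by
  rw [he]; simp [tevStep, hv]

lemma Runs.rep0 {b : ℕ} {sig : Ev → Tev} {e : Ev} (he : sig e = Tev.pr 0 0) {v : ℕ}
    (hv : v ≤ b) (n : ℕ) : Runs b sig v (List.replicate n e) v := by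
  induction n with
  | zero => exact Runs.nil v
  | succ k ih =>
    rw [List.replicate_succ]
    exact Runs.cons (step00 he hv) ih

lemma Runs.rep1 {b : ℕ} {sig : Ev → Tev} {e : Ev} (he : sig e = Tev.pr 1 0) :
    ∀ (n v : ℕ), n ≤ v → v ≤ b → Runs b sig v (List.replicate n e) (v - n) := by
  intro n
  induction n with
  | zero => intro v _ _; simpa using Runs.nil v
  | succ k ih =>
    intro v hn hv
    have hs : tevStep b v (sig e) = some (v - 1) := by
      rw [he]; simp only [tevStep]
      rw [if_pos ⟨by omega, by omega⟩]
      simp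
    rw [List.replicate_succ]
    have := ih (v - 1) (by omega) (by omega)
    refine Runs.cons hs ?_
    have hvv : v - 1 - k = v - (k + 1) := by omega
    rwa [hvv] at this

lemma stepv_le (b : ℕ) (sig : Ev → Tev) (v : ℕ) (e : Ev) : stepv b sig v e ≤ b := by
  unfold stepv
  cases h : sig e with
  | pr m n =>
    simp only [tevStep]
    split
    · next h' => simpa using h'.2
    · simp
  | gr c =>
    simp only [tevStep, Option.getD_some]
    exact Nat.lt_succ_iff.mp (Nat.mod_lt _ (Nat.succ_pos b))

lemma runEnd_le {b : ℕ} {sig : Ev → Tev} :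
    ∀ (w : List Ev) (v : ℕ), v ≤ b → runEnd b sig v w ≤ b := by
  intro w
  induction w with
  | nil => intro v hv; exact hv
  | cons a w ih => intro v hv; rw [runEnd_cons]; exact ih _ (stepv_le b sig v a)

open Classical

/-- The signature used in the proof of Statement 8. -/
noncomputable def mysig (b m : ℕ) (M : Set (Fin m)) (rsel : Fin m → Fin 3) : Ev → Tev
  | .kj _ => .pr 0 b
  | .X v => if ∃ hv : v < m, (⟨v, hv⟩ : Fin m) ∈ M then .pr 1 0 else .pr 0 0
  | .x i => if ∃ hi : i < m, rsel ⟨i, hi⟩ = 1 then .pr b 0 else .pr 0 0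
  | .p i => if ∃ hi : i < m, rsel ⟨i, hi⟩ = 1 then .pr 0 0 else .pr b 0
  | _ => .pr 0 0

lemma mysig_kj (b m : ℕ) (M : Set (Fin m)) (rsel : Fin m → Fin 3) (j : ℕ) :
    mysig b m M rsel (Ev.kj j) = Tev.pr 0 b := rfl

lemma mysig_X (b : ℕ) {m : ℕ} (M : Set (Fin m)) (rsel : Fin m → Fin 3) (u : Fin m) :
    mysig b m M rsel (Ev.X (u : ℕ)) = if u ∈ M then Tev.pr 1 0 else Tev.pr 0 0 := by
  simp only [mysig]
  by_cases h : u ∈ M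
  · rw [if_pos ⟨u.isLt, by simpa using h⟩, if_pos h]
  · rw [if_neg, if_neg h]
    rintro ⟨hv, hmem⟩
    exact h (by simpa using hmem)

lemma mysig_x (b : ℕ) {m : ℕ} (M : Set (Fin m)) (rsel : Fin m → Fin 3) (i : Fin m) :
    mysig b m M rsel (Ev.x (i : ℕ)) = if rsel i = 1 then Tev.pr b 0 else Tev.pr 0 0 := by
  simp only [mysig]
  by_cases h : rsel i = 1
  · rw [if_pos ⟨i.isLt, by simpa using h⟩, if_pos h]
  · rw [if_neg, if_neg h]
    rintro ⟨hv, hsel⟩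
    exact h (by simpa using hsel)

lemma mysig_p (b : ℕ) {m : ℕ} (M : Set (Fin m)) (rsel : Fin m → Fin 3) (i : Fin m) :
    mysig b m M rsel (Ev.p (i : ℕ)) = if rsel i = 1 then Tev.pr 0 0 else Tev.pr b 0 := by
  simp only [mysig]
  by_cases h : rsel i = 1
  · rw [if_pos ⟨i.isLt, by simpa using h⟩, if_pos h]
  · rw [if_neg, if_neg h]
    rintro ⟨hv, hsel⟩
    exact h (by simpa using hsel)

lemma fin3_cases (r : Fin 3) : r = 0 ∨ r = 1 ∨ r = 2 := by
  rcases r with ⟨v, h⟩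
  simp only [Fin.ext_iff, Fin.val_zero, Fin.val_one, Fin.val_two]
  omega

/-- The run of each translator gadget word is defined and ends at `b`. -/
lemma word_runs {b m : ℕ} (hb : 1 ≤ b) (φ : SatInstance m) (M : Set (Fin m))
    (rsel : Fin m → Fin 3) (hmem : ∀ i a, φ.C i a ∈ M ↔ rsel i = a)
    (i : Fin m) (a : Fin 3) :
    Runs b (mysig b m M rsel) 0 (Tword b φ i a) b := by
  set sig := mysig b m M rsel with hsig
  have hK : ∀ j, sig (Ev.kj j) = Tev.pr 0 b := fun j => rfl
  have hX : ∀ a' : Fin 3, sig (Ev.X ((φ.C i a' : Fin m) : ℕ))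
      = if rsel i = a' then Tev.pr 1 0 else Tev.pr 0 0 := by
    intro a'; rw [hsig, mysig_X]; simp only [hmem]
  have hx : sig (Ev.x (i : ℕ)) = if rsel i = 1 then Tev.pr b 0 else Tev.pr 0 0 :=
    mysig_x ..
  have hp : sig (Ev.p (i : ℕ)) = if rsel i = 1 then Tev.pr 0 0 else Tev.pr b 0 :=
    mysig_p ..
  have hs0b : tevStep b 0 (Tev.pr 0 b) = some b := by simp [tevStep]
  have hsb0 : tevStep b b (Tev.pr b 0) = some 0 := by simp [tevStep]
  have hkj : ∀ (j : ℕ) (v : ℕ), v = 0 → tevStep b v (sig (Ev.kj j)) = some b := by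
    rintro j v rfl; rw [hK]; exact hs0b
  rcases fin3_cases a with rfl | rfl | rfl
  all_goals rcases fin3_cases (rsel i) with hr | hr | hr
  all_goals simp only [Tword, if_pos rfl, reduceIte,
    show ((1 : Fin 3) = 0) = False by simp,
    show ((2 : Fin 3) = 0) = False by simp,
    show ((2 : Fin 3) = 1) = False by simp,
    show ((1 : Fin 3) = 1) = True by simp, if_true, if_false]
  -- a = 0 cases
  · -- rsel i = 0
    refine Runs.append (Runs.append (Runs.append (Runs.append
      (Runs.single (hkj _ 0 rfl))
      (show Runs b sig b _ 0 by
        simpa using Runs.rep1 (by rw [hX 0, if_pos hr]) b b le_rfl le_rfl))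
      (Runs.single (step00 (by rw [hx, if_neg (by rw [hr]; decide)]) (Nat.zero_le b))))
      (Runs.rep0 (by rw [hX 2, if_neg (by rw [hr]; decide)]) (Nat.zero_le b) b))
      (Runs.single (hkj _ 0 rfl))
  · -- rsel i = 1
    refine Runs.append (Runs.append (Runs.append (Runs.append
      (Runs.single (hkj _ 0 rfl))
      (Runs.rep0 (by rw [hX 0, if_neg (by rw [hr]; decide)]) le_rfl b))
      (Runs.single (by rw [hx, if_pos hr]; exact hsb0)))
      (Runs.rep0 (by rw [hX 2, if_neg (by rw [hr]; decide)]) (Nat.zero_le b) b))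
      (Runs.single (hkj _ 0 rfl))
  · -- rsel i = 2
    refine Runs.append (Runs.append (Runs.append (Runs.append
      (Runs.single (hkj _ 0 rfl))
      (Runs.rep0 (by rw [hX 0, if_neg (by rw [hr]; decide)]) le_rfl b))
      (Runs.single (step00 (by rw [hx, if_neg (by rw [hr]; decide)]) le_rfl)))
      (show Runs b sig b _ 0 by
        simpa using Runs.rep1 (by rw [hX 2, if_pos hr]) b b le_rfl le_rfl))
      (Runs.single (hkj _ 0 rfl))
  -- a = 1 cases
  · refine Runs.append (Runs.append
      (Runs.single (hkj _ 0 rfl))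
      (Runs.rep0 (by rw [hX 1, if_neg (by rw [hr]; decide)]) le_rfl b))
      (Runs.cons (by rw [hp, if_neg (by rw [hr]; decide)]; exact hsb0)
        (Runs.single (hkj _ 0 rfl)))
  · refine Runs.append (Runs.append
      (Runs.single (hkj _ 0 rfl))
      (show Runs b sig b _ 0 by
        simpa using Runs.rep1 (by rw [hX 1, if_pos hr]) b b le_rfl le_rfl))
      (Runs.cons (step00 (by rw [hp, if_pos hr]) (Nat.zero_le b))
        (Runs.single (hkj _ 0 rfl)))
  · refine Runs.append (Runs.append
      (Runs.single (hkj _ 0 rfl))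
      (Runs.rep0 (by rw [hX 1, if_neg (by rw [hr]; decide)]) le_rfl b))
      (Runs.cons (by rw [hp, if_neg (by rw [hr]; decide)]; exact hsb0)
        (Runs.single (hkj _ 0 rfl)))
  -- a = 2 cases
  · refine Runs.cons (hkj _ 0 rfl) (Runs.cons
      (step00 (by rw [hx, if_neg (by rw [hr]; decide)]) le_rfl) (Runs.cons
      (by rw [hp, if_neg (by rw [hr]; decide)]; exact hsb0)
      (Runs.single (hkj _ 0 rfl))))
  · refine Runs.cons (hkj _ 0 rfl) (Runs.cons
      (by rw [hx, if_pos hr]; exact hsb0) (Runs.cons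
      (step00 (by rw [hp, if_pos hr]) (Nat.zero_le b))
      (Runs.single (hkj _ 0 rfl))))
  · refine Runs.cons (hkj _ 0 rfl) (Runs.cons
      (step00 (by rw [hx, if_neg (by rw [hr]; decide)]) le_rfl) (Runs.cons
      (by rw [hp, if_neg (by rw [hr]; decide)]; exact hsb0)
      (Runs.single (hkj _ 0 rfl))))

/-- Decoding a gadget word from the state tag. -/
noncomputable def mywordOf (b : ℕ) {m : ℕ} (φ : SatInstance m) (tag : ℕ) : List Ev :=
  if h : (tag - 1) / 3 < m then
    Tword b φ ⟨(tag - 1) / 3, h⟩ ⟨(tag - 1) % 3, by omega⟩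
  else []

lemma mywordOf_eq (b : ℕ) {m : ℕ} (φ : SatInstance m) (q : Fin m × Fin 3) :
    mywordOf b φ (3 * (q.1 : ℕ) + (q.2 : ℕ) + 1) = Tword b φ q.1 q.2 := by
  have h2 := q.2.isLt
  have h1 := q.1.isLt
  have e1 : (3 * (q.1 : ℕ) + (q.2 : ℕ) + 1 - 1) / 3 = (q.1 : ℕ) := by omega
  have e2 : (3 * (q.1 : ℕ) + (q.2 : ℕ) + 1 - 1) % 3 = (q.2 : ℕ) := by omega
  rw [mywordOf, dif_pos (by rw [e1]; exact h1)]
  congr 1 <;> apply Fin.ext <;> simpa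

end Stmt8aux

/-- Existence for the translator `T`: for `τ ∈ {τ^b_0, τ^b_1}`,
if `φ` has a one-in-three model, then some `τ`-region of `T` satisfies
`sig(k_0) = … = sig(k_{6m-1}) = (0,b)`. -/
theorem stmt8 (b t : ℕ) (hb : 1 ≤ b) (ht : t = 0 ∨ t = 1)
    {m : ℕ} (hm : 1 ≤ m) (φ : SatInstance m)
    (hmod : ∃ M : Set (Fin m), φ.model M) :
    ∃ R : Region b t (Ttrans b φ), ∀ j < 6 * m, R.sig (Ev.kj j) = Tev.pr 0 b := by
  classical
  obtain ⟨M, hM⟩ := hmod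
  set rsel : Fin m → Fin 3 := fun i => (hM i).choose with hrsel
  have hrin : ∀ i, φ.C i (rsel i) ∈ M := fun i => (hM i).choose_spec.1
  have hruniq : ∀ i r, φ.C i r ∈ M → r = rsel i := fun i r h => (hM i).choose_spec.2 r h
  have hmem : ∀ i a, φ.C i a ∈ M ↔ rsel i = a := by
    intro i a
    constructor
    · intro h; exact (hruniq i a h).symm
    · rintro rfl; exact hrin i
  set sig : Ev → Tev := Stmt8aux.mysig b m M rsel with hsig
  have hword : ∀ (i : Fin m) (a : Fin 3),
      Stmt8aux.Runs b sig 0 (Tword b φ i a) b :=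
    Stmt8aux.word_runs hb φ M rsel hmem
  refine ⟨⟨fun s => Stmt8aux.runEnd b sig 0 ((Stmt8aux.mywordOf b φ s.1).take s.2),
    sig, ?_, ?_, ?_⟩, ?_⟩
  · intro s _
    exact Stmt8aux.runEnd_le _ 0 (Nat.zero_le b)
  · intro e _
    have hok : ∀ m' n' : ℕ, m' ≤ b → n' ≤ b → (m' = 0 ∨ n' = 0) →
        tevOk b t (Tev.pr m' n') := by
      intro m' n' h1 h2 h3
      exact ⟨h1, h2, fun _ => h3, fun h => by rcases ht with rfl | rfl <;> simp at h⟩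
    rw [hsig]
    cases e <;> simp only [Stmt8aux.mysig] <;>
      first
        | (exact hok _ _ (Nat.zero_le b) le_rfl (Or.inl rfl))
        | (exact hok 0 0 (Nat.zero_le b) (Nat.zero_le b) (Or.inl rfl))
        | (split <;>
            first
              | exact hok 1 0 hb (Nat.zero_le b) (Or.inr rfl)
              | exact hok b 0 le_rfl (Nat.zero_le b) (Or.inr rfl)
              | exact hok 0 0 (Nat.zero_le b) (Nat.zero_le b) (Or.inl rfl))
  · rintro s e s' ⟨q, pos, pos', ⟨hget, rfl⟩, rfl, rfl⟩
    dsimp only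
    rw [Stmt8aux.mywordOf_eq b φ q]
    exact Stmt8aux.runsOk_getElem _ 0 pos e (hword q.1 q.2).1 hget
  · intro j _
    rfl
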